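/- Let G be a finite weighted directed graph, all whose cycles pass through e = (u,v), and let C_1, ..., C_k be the cycles recorded by the iterative process, ordered with increasing maximum edge weight. Then γ(C_1) ≤ γ(C_2) ≤ ... ≤ γ(C_k) does not necessarily hold, but: for any cycle C of G with M(C_i) < M(C) < M(C_{i+1}), we have γ(C) ≤ γ(C_i). -/

import Mathlib

/-- A directed multigraph: edges `E` with source and target vertices in `V`. -/
structure MultiDigraph (V : Type) (E : Type) where
  src : E → V
  tgt : E → V

namespace MultiDigraph

variable {V E : Type}

/-- `G.IsWalk v u l` : the list of edges `l` forms a directed walk from `v` to `u`. -/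
def IsWalk (G : MultiDigraph V E) : V → V → List E → Prop
  | v, u, [] => v = u
  | v, u, e :: l => G.src e = v ∧ G.IsWalk (G.tgt e) u l

/-- A (directed) cycle: a nonempty closed walk. -/
def IsCycle (G : MultiDigraph V E) (l : List E) : Prop :=
  l ≠ [] ∧ ∃ x, G.IsWalk x x l

/-- minimum edge weight (critical edge value γ) along a nonempty list of edges. -/
noncomputable def minW (w : E → ℝ) (l : List E) : ℝ := ((l.map w).min?).getD 0

/-- maximum edge weight M along a nonempty list of edges. -/
noncomputable def maxW (w : E → ℝ) (l : List E) : ℝ := ((l.map w).max?).getD 0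

/-- flow value φ = M − γ. -/
noncomputable def flowVal (w : E → ℝ) (l : List E) : ℝ := maxW w l - minW w l

end MultiDigraph

namespace MultiDigraph

variable {V E : Type}

/-- The edges of `l` all lie in the edge set `F`. -/
def EdgesIn (l : List E) (F : Finset E) : Prop := ∀ f ∈ l, f ∈ F

/-- `P` is a maxflow path from `v` to `u` using only edges of `F`. -/
def IsMaxflowPathIn (G : MultiDigraph V E) (w : E → ℝ) (v u : V) (F : Finset E)
    (P : List E) : Prop :=
  G.IsWalk v u P ∧ P ≠ [] ∧ EdgesIn P F ∧
    ∀ Q, G.IsWalk v u Q → Q ≠ [] → EdgesIn Q F → minW w Q ≤ minW w P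

/-- `ProcessRun G w e u v k Es Ps`: the iterative process of Algorithm 2.
Starting from the whole graph (`Es 0 = univ`), at each step `i < k` the list
`Ps i` is a maxflow path from `v` to `u` in the current edge set `Es i`, the
cycle `Ps i ++ [e]` is recorded, and every edge other than `e` of weight
`≥ M(Ps i)` is deleted to form `Es (i+1)`. -/
def ProcessRun [Fintype E] (G : MultiDigraph V E) (w : E → ℝ) (e : E) (u v : V)
    (k : ℕ) (Es : ℕ → Finset E) (Ps : ℕ → List E) : Prop :=
  Es 0 = Finset.univ ∧
  ∀ i < k,
    G.IsMaxflowPathIn w v u (Es i) (Ps i) ∧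
    ((Es (i+1) : Set E) = {f ∈ (Es i : Set E) | ¬ (maxW w (Ps i) ≤ w f ∧ f ≠ e)})

/-- There is a cycle all of whose edges lie in `F`. -/
def HasCycleIn (G : MultiDigraph V E) (F : Finset E) : Prop :=
  ∃ C, G.IsCycle C ∧ EdgesIn C F

end MultiDigraph

namespace MultiDigraph

variable {V E : Type}

lemma minW_le_of_mem {w : E → ℝ} {l : List E} {f : E} (hf : f ∈ l) : minW w l ≤ w f := by
  have hmem : w f ∈ l.map w := List.mem_map_of_mem (f := w) hf
  rcases hm : (l.map w).min? with _ | m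
  · rw [List.min?_eq_none_iff] at hm; simp [hm] at hmem
  · have := (List.le_min?_iff hm).1 (le_refl m) _ hmem
    simpa [minW, hm] using this

lemma le_maxW_of_mem {w : E → ℝ} {l : List E} {f : E} (hf : f ∈ l) : w f ≤ maxW w l := by
  have hmem : w f ∈ l.map w := List.mem_map_of_mem (f := w) hf
  rcases hm : (l.map w).max? with _ | m
  · rw [List.max?_eq_none_iff] at hm; simp [hm] at hmem
  · have := (List.max?_le_iff hm).1 (le_refl m) _ hmem
    simpa [maxW, hm] using this

lemma exists_maxW_eq {w : E → ℝ} {l : List E} (hl : l ≠ []) :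
    ∃ f ∈ l, maxW w l = w f := by
  rcases hm : (l.map w).max? with _ | m
  · rw [List.max?_eq_none_iff, List.map_eq_nil_iff] at hm; exact absurd hm hl
  · have hmem : m ∈ l.map w := List.max?_mem hm
    obtain ⟨f, hf, hfm⟩ := List.mem_map.1 hmem
    exact ⟨f, hf, by simp [maxW, hm, hfm]⟩

lemma exists_minW_eq {w : E → ℝ} {l : List E} (hl : l ≠ []) :
    ∃ f ∈ l, minW w l = w f := by
  rcases hm : (l.map w).min? with _ | m
  · rw [List.min?_eq_none_iff, List.map_eq_nil_iff] at hm; exact absurd hm hl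
  · have hmem : m ∈ l.map w := List.min?_mem hm
    obtain ⟨f, hf, hfm⟩ := List.mem_map.1 hmem
    exact ⟨f, hf, by simp [minW, hm, hfm]⟩

lemma isWalk_append {G : MultiDigraph V E} {x y : V} {p q : List E} :
    G.IsWalk x y (p ++ q) ↔ ∃ m, G.IsWalk x m p ∧ G.IsWalk m y q := by
  induction p generalizing x with
  | nil =>
    constructor
    · intro h; exact ⟨x, rfl, h⟩
    · rintro ⟨m, hm, h⟩; cases hm; exact h
  | cons f p ih =>
    constructor
    · rintro ⟨hf, hw⟩
      obtain ⟨m, h1, h2⟩ := ih.1 hw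
      exact ⟨m, ⟨hf, h1⟩, h2⟩
    · rintro ⟨m, ⟨hf, h1⟩, h2⟩
      exact ⟨hf, ih.2 ⟨m, h1, h2⟩⟩

end MultiDigraph

open MultiDigraph in
/-- for consecutive recorded cycles (the process records them in
decreasing order of maximum edge weight, so `Ps (a+1) ++ [e]` is the cycle
`C_i` with the smaller maximum and `Ps a ++ [e]` is `C_{i+1}`), every cycle C
of G whose maximum edge weight lies strictly between theirs satisfies
γ(C) ≤ γ(C_i). -/
theorem stmt_14 {V E : Type} [Fintype E] [DecidableEq E]
    (G : MultiDigraph V E) (w : E → ℝ) (e : E) (u v : V)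
    (hsrc : G.src e = u) (htgt : G.tgt e = v)
    (hall : ∀ l, G.IsCycle l → e ∈ l)
    (k : ℕ) (Es : ℕ → Finset E) (Ps : ℕ → List E)
    (hrun : G.ProcessRun w e u v k Es Ps)
    (hterm : ¬ G.HasCycleIn (Es k)) :
    ∀ a, a + 1 < k → ∀ C, G.IsCycle C →
      maxW w (Ps (a+1) ++ [e]) < maxW w C →
      maxW w C < maxW w (Ps a ++ [e]) →
      minW w C ≤ minW w (Ps (a+1) ++ [e]) := by
  obtain ⟨hEs0, hstep⟩ := hrun
  intro a ha C hC hlo hhi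
  have heC : e ∈ C := hall C hC
  have hweC : w e ≤ maxW w C := le_maxW_of_mem heC
  -- one-step monotonicity of the maxima of recorded cycles
  have key : ∀ j, j + 1 < k → maxW w (Ps (j+1) ++ [e]) ≤ maxW w (Ps j ++ [e]) := by
    intro j hj
    have hj' : j < k := by omega
    obtain ⟨hmf, hdel⟩ := hstep j hj'
    obtain ⟨hmf1, _⟩ := hstep (j+1) hj
    obtain ⟨_, hne1, hin1, _⟩ := hmf1
    obtain ⟨g, hg, hgeq⟩ := exists_maxW_eq (w := w) (l := Ps (j+1) ++ [e]) (by simp)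
    rw [hgeq]
    rcases List.mem_append.1 hg with hgP | hge
    · have hgE : g ∈ Es (j+1) := hin1 g hgP
      have hmem : (g : E) ∈ ({f ∈ (Es j : Set E) | ¬ (maxW w (Ps j) ≤ w f ∧ f ≠ e)} : Set E) := by
        rw [← hdel]; exact hgE
      obtain ⟨-, hg2⟩ := hmem
      by_cases hgeq2 : g = e
      · subst hgeq2
        exact le_maxW_of_mem (List.mem_append_right _ (by simp))
      · have hlt : w g < maxW w (Ps j) := by
          by_contra hcon
          exact hg2 ⟨le_of_not_gt hcon, hgeq2⟩
        obtain ⟨g', hg', hg'eq⟩ := exists_maxW_eq (w := w) (l := Ps j) hmf.2.1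
        have : maxW w (Ps j) ≤ maxW w (Ps j ++ [e]) := by
          rw [hg'eq]; exact le_maxW_of_mem (List.mem_append_left _ hg')
        linarith
    · have hge' : g = e := by simpa using hge
      subst hge'
      exact le_maxW_of_mem (List.mem_append_right _ (by simp))
  -- monotonicity over a range
  have mono : ∀ j, j < k → ∀ i, i ≤ j → maxW w (Ps j ++ [e]) ≤ maxW w (Ps i ++ [e]) := by
    intro j
    induction j with
    | zero => intro _ i hi; interval_cases i; exact le_rfl
    | succ n ih =>
      intro hn i hi
      rcases Nat.lt_succ_iff_lt_or_eq.1 (Nat.lt_succ_of_le hi) with h | h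
      · exact le_trans (key n hn) (ih (by omega) i (by omega))
      · subst h; exact le_rfl
  -- the maximum of every earlier recorded path exceeds maxW C
  have hMj : ∀ j, j ≤ a → maxW w C < maxW w (Ps j) := by
    intro j hj
    have hNj : maxW w C < maxW w (Ps j ++ [e]) :=
      lt_of_lt_of_le hhi (mono a (by omega) j hj)
    obtain ⟨g, hg, hgeq⟩ := exists_maxW_eq (w := w) (l := Ps j ++ [e]) (by simp)
    rcases List.mem_append.1 hg with hgP | hge
    · rw [hgeq] at hNj
      exact lt_of_lt_of_le hNj (le_maxW_of_mem hgP)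
    · have : g = e := by simpa using hge
      subst this
      rw [hgeq] at hNj
      linarith
  -- all edges of C survive up to step a+1
  have surv : ∀ j, j ≤ a + 1 → ∀ f ∈ C, f ∈ Es j := by
    intro j
    induction j with
    | zero => intro _ f _; rw [hEs0]; exact Finset.mem_univ f
    | succ n ih =>
      intro hn f hf
      have hfn := ih (by omega) f hf
      obtain ⟨-, hdel⟩ := hstep n (by omega)
      have hmem : (f : E) ∈ ({g ∈ (Es n : Set E) | ¬ (maxW w (Ps n) ≤ w g ∧ g ≠ e)} : Set E) := by
        refine ⟨hfn, ?_⟩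
        rintro ⟨hle, -⟩
        have h1 : w f ≤ maxW w C := le_maxW_of_mem hf
        have h2 := hMj n (by omega)
        linarith
      have : (f : E) ∈ (Es (n+1) : Set E) := by rw [hdel]; exact hmem
      exact this
  -- decompose the cycle C around the edge e
  obtain ⟨hCne, x, hwalk⟩ := hC
  obtain ⟨l1, l2, rfl⟩ := List.append_of_mem heC
  obtain ⟨m, hwl1, hwel2⟩ := isWalk_append.1 hwalk
  obtain ⟨hm, hwl2⟩ := hwel2
  have hmu : m = u := by rw [← hsrc, hm]
  rw [hmu] at hwl1
  rw [htgt] at hwl2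
  -- the path Q from v to u extracted from C
  set Q : List E := l2 ++ l1 with hQ
  have hQwalk : G.IsWalk v u Q := isWalk_append.2 ⟨x, hwl2, hwl1⟩
  have hQne : Q ≠ [] := by
    intro h
    have h12 : l2 = [] ∧ l1 = [] := by
      constructor <;> (by_contra hc; simp [hQ, hc] at h)
    obtain ⟨h2', h1'⟩ := h12
    subst h2'; subst h1'
    have : maxW w ([] ++ e :: []) = w e := by simp [maxW]
    rw [this] at hlo
    have : w e ≤ maxW w (Ps (a+1) ++ [e]) :=
      le_maxW_of_mem (List.mem_append_right _ (by simp))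
    linarith
  have hQsub : ∀ f ∈ Q, f ∈ l1 ++ e :: l2 := by
    intro f hf
    rcases List.mem_append.1 hf with h | h
    · exact List.mem_append_right _ (List.mem_cons_of_mem _ h)
    · exact List.mem_append_left _ h
  have hQin : EdgesIn Q (Es (a+1)) := fun f hf => surv (a+1) le_rfl f (hQsub f hf)
  obtain ⟨hmf, _⟩ := hstep (a+1) ha
  obtain ⟨-, -, -, hopt⟩ := hmf
  have hQle : minW w Q ≤ minW w (Ps (a+1)) := hopt Q hQwalk hQne hQin
  have hCQ : minW w (l1 ++ e :: l2) ≤ minW w Q := by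
    obtain ⟨f, hf, hfeq⟩ := exists_minW_eq (w := w) hQne
    rw [hfeq]
    exact minW_le_of_mem (hQsub f hf)
  obtain ⟨g, hg, hgeq⟩ := exists_minW_eq (w := w) (l := Ps (a+1) ++ [e]) (by simp)
  rw [hgeq]
  rcases List.mem_append.1 hg with hgP | hge
  · have : minW w (Ps (a+1)) ≤ w g := minW_le_of_mem hgP
    linarith
  · have : g = e := by simpa using hge
    subst this
    exact minW_le_of_mem heC
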